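/- If E ⊆ X is Caratheodory measurable with respect to μ* (i.e., for every A ⊆ X, μ*(A) = μ*(A ∩ E) + μ*(A ∩ Eᶜ)), then E ∈ S̃; that is, there exists a sequence (Bₙ) in Ω with μ*(Bₙ △ E) → 0. -/

import Mathlib

open scoped symmDiff ENNReal
open Filter Set Topology

/-- The outer measure induced by `μ : Ω → ℝ≥0∞`:
`μ*(E) = inf { ∑ᵢ μ(Aᵢ) : E ⊆ ⋃ᵢ Aᵢ, each Aᵢ ∈ Ω }`. -/
noncomputable def muStar {X : Type*} (Ω : Set (Set X)) (μ : Set X → ℝ≥0∞) (E : Set X) : ℝ≥0∞ :=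
  ⨅ (A : ℕ → Set X) (_ : ∀ i, A i ∈ Ω) (_ : E ⊆ ⋃ i, A i), ∑' i, μ (A i)

/-- `S̃ = { S ⊆ X : ∃ (Bₙ) in Ω with μ*(Bₙ △ S) → 0 }`. -/
def Stilde {X : Type*} (Ω : Set (Set X)) (μ : Set X → ℝ≥0∞) : Set (Set X) :=
  {S | ∃ B : ℕ → Set X, (∀ n, B n ∈ Ω) ∧
    Tendsto (fun n => muStar Ω μ (B n ∆ S)) atTop (𝓝 0)}

lemma muStar_le_sum {X : Type*} (Ω : Set (Set X)) (μ : Set X → ℝ≥0∞)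
    {S : Set X} {A : ℕ → Set X} (hA : ∀ i, A i ∈ Ω) (hS : S ⊆ ⋃ i, A i) :
    muStar Ω μ S ≤ ∑' i, μ (A i) := by
  refine iInf_le_of_le A (iInf_le_of_le hA (iInf_le _ hS))

lemma muStar_mono {X : Type*} (Ω : Set (Set X)) (μ : Set X → ℝ≥0∞)
    {S T : Set X} (h : S ⊆ T) : muStar Ω μ S ≤ muStar Ω μ T := by
  refine le_iInf fun A => le_iInf fun hA => le_iInf fun hT =>
    muStar_le_sum Ω μ hA (h.trans hT)

lemma finset_biUnion_mem {X : Type*} (Ω : Set (Set X))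
    (hΩempty : ∅ ∈ Ω) (hΩunion : ∀ A ∈ Ω, ∀ B ∈ Ω, A ∪ B ∈ Ω)
    (A : ℕ → Set X) (hA : ∀ i, A i ∈ Ω) (s : Finset ℕ) :
    (⋃ i ∈ s, A i) ∈ Ω := by
  classical
  induction s using Finset.induction with
  | empty => simpa using hΩempty
  | insert _ _ hn ih =>
    rw [Finset.set_biUnion_insert]
    exact hΩunion _ (hA _) _ ih

/-- If `E` is Caratheodory measurable with respect to `μ*`, then `E ∈ S̃`. -/
theorem stmt_13 {X : Type*} (Ω : Set (Set X)) (μ : Set X → ℝ≥0∞)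
    (hΩempty : ∅ ∈ Ω) (hΩuniv : Set.univ ∈ Ω)
    (hΩcompl : ∀ A ∈ Ω, Aᶜ ∈ Ω) (hΩunion : ∀ A ∈ Ω, ∀ B ∈ Ω, A ∪ B ∈ Ω)
    (hμempty : μ ∅ = 0) (hμfin : μ Set.univ < ⊤)
    (hμadd : ∀ A : ℕ → Set X, (∀ i, A i ∈ Ω) → Pairwise (Function.onFun Disjoint A) →
      (⋃ i, A i) ∈ Ω → μ (⋃ i, A i) = ∑' i, μ (A i))
    (E : Set X)
    (hE : ∀ A : Set X, muStar Ω μ A = muStar Ω μ (A ∩ E) + muStar Ω μ (A ∩ Eᶜ)) :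
    E ∈ Stilde Ω μ := by
  classical
  -- μ*(E) is finite
  have hEfin : muStar Ω μ E < ⊤ := by
    have hcov : E ⊆ ⋃ i : ℕ, (if i = 0 then Set.univ else (∅ : Set X)) := by
      intro x _
      exact Set.mem_iUnion.2 ⟨0, by simp⟩
    have h1 : muStar Ω μ E ≤ ∑' i : ℕ, μ (if i = 0 then Set.univ else (∅ : Set X)) :=
      muStar_le_sum Ω μ (fun i => by by_cases h : i = 0 <;> simp [h, hΩuniv, hΩempty]) hcov
    have h2 : ∑' i : ℕ, μ (if i = 0 then Set.univ else (∅ : Set X)) = μ Set.univ := by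
      rw [tsum_eq_single 0 (fun b hb => by simp [hb, hμempty])]
      simp
    exact lt_of_le_of_lt (h1.trans_eq h2) hμfin
  -- key approximation step
  have key : ∀ ε : ℝ≥0∞, ε ≠ 0 → ε ≠ ⊤ → ∃ B ∈ Ω, muStar Ω μ (B ∆ E) ≤ ε + ε := by
    intro ε hε hεtop
    have hlt : muStar Ω μ E < muStar Ω μ E + ε :=
      ENNReal.lt_add_right hEfin.ne hε
    have : (⨅ (A : ℕ → Set X) (_ : ∀ i, A i ∈ Ω) (_ : E ⊆ ⋃ i, A i), ∑' i, μ (A i))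
        < muStar Ω μ E + ε := hlt
    rw [iInf_lt_iff] at this
    obtain ⟨A, hA⟩ := this
    rw [iInf_lt_iff] at hA
    obtain ⟨hAΩ, hA⟩ := hA
    rw [iInf_lt_iff] at hA
    obtain ⟨hAcov, hsum⟩ := hA
    -- tail of the series
    have hsumne : (∑' i, μ (A i)) ≠ ⊤ := (hsum.trans (ENNReal.add_lt_top.2 ⟨hEfin, lt_top_iff_ne_top.2 hεtop⟩)).ne
    have htail : Tendsto (fun n => ∑' i, μ (A (i + n))) atTop (𝓝 0) :=
      ENNReal.tendsto_sum_nat_add _ hsumne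
    obtain ⟨N, hN⟩ := (htail.eventually (gt_mem_nhds (pos_iff_ne_zero.2 hε))).exists
    set B : Set X := ⋃ i ∈ Finset.range N, A i with hBdef
    have hBΩ : B ∈ Ω := finset_biUnion_mem Ω hΩempty hΩunion A hAΩ _
    refine ⟨B, hBΩ, ?_⟩
    set U : Set X := ⋃ i, A i with hUdef
    -- μ*(U ∩ Eᶜ) ≤ ε
    have hEU : E ⊆ U := hAcov
    have hUE : U ∩ E = E := by
      apply Set.inter_eq_self_of_subset_right hEU
    have hUsplit : muStar Ω μ U = muStar Ω μ E + muStar Ω μ (U ∩ Eᶜ) := by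
      rw [hE U, hUE]
    have hUle : muStar Ω μ U ≤ ∑' i, μ (A i) :=
      muStar_le_sum Ω μ hAΩ Set.Subset.rfl
    have hcompl : muStar Ω μ (U ∩ Eᶜ) ≤ ε := by
      have h1 : muStar Ω μ E + muStar Ω μ (U ∩ Eᶜ) ≤ muStar Ω μ E + ε := by
        rw [← hUsplit]
        exact hUle.trans hsum.le
      exact (ENNReal.add_le_add_iff_left hEfin.ne).1 h1
    -- μ*(E \ B) ≤ ε
    have hEB : E \ B ⊆ ⋃ i, A (i + N) := by
      intro x hx
      obtain ⟨hxE, hxB⟩ := hx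
      obtain ⟨i, hi⟩ := Set.mem_iUnion.1 (hEU hxE)
      by_cases h : i < N
      · exact absurd (Set.mem_biUnion (Finset.mem_range.2 h) hi) hxB
      · push_neg at h
        exact Set.mem_iUnion.2 ⟨i - N, by rwa [Nat.sub_add_cancel h]⟩
    have hEBle : muStar Ω μ (E \ B) ≤ ε :=
      (muStar_le_sum Ω μ (fun i => hAΩ _) hEB).trans hN.le
    -- combine via Caratheodory on B ∆ E
    have hsymm : muStar Ω μ (B ∆ E) = muStar Ω μ (E \ B) + muStar Ω μ (B \ E) := by
      rw [hE (B ∆ E)]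
      congr 1
      · congr 1
        ext x
        simp only [Set.mem_symmDiff, Set.mem_inter_iff, Set.mem_diff]
        tauto
      · congr 1
        ext x
        simp only [Set.mem_symmDiff, Set.mem_inter_iff, Set.mem_diff, Set.mem_compl_iff]
        tauto
    have hBU : B ⊆ U := by
      intro x hx
      obtain ⟨i, _, hi⟩ := Set.mem_iUnion₂.1 hx
      exact Set.mem_iUnion.2 ⟨i, hi⟩
    have hBEle : muStar Ω μ (B \ E) ≤ ε := by
      refine (muStar_mono Ω μ ?_).trans hcompl
      intro x hx
      exact ⟨hBU hx.1, hx.2⟩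
    rw [hsymm]
    exact add_le_add hEBle hBEle
  -- build the sequence
  have hchoice : ∀ n : ℕ, ∃ B ∈ Ω,
      muStar Ω μ (B ∆ E) ≤ ((n : ℝ≥0∞) + 1)⁻¹ + ((n : ℝ≥0∞) + 1)⁻¹ := by
    intro n
    refine key _ (by simp) (by simp [ENNReal.inv_ne_top])
  choose B hBΩ hBle using hchoice
  refine ⟨B, hBΩ, ?_⟩
  have hone : Tendsto (fun n : ℕ => ((n : ℝ≥0∞) + 1)⁻¹) atTop (𝓝 0) := by
    have h := ENNReal.tendsto_inv_nat_nhds_zero.comp (tendsto_add_atTop_nat 1)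
    convert h using 2 with n
    simp [Function.comp]
  have hlim : Tendsto (fun n : ℕ => ((n : ℝ≥0∞) + 1)⁻¹ + ((n : ℝ≥0∞) + 1)⁻¹) atTop (𝓝 0) := by
    simpa using hone.add hone
  exact tendsto_of_tendsto_of_tendsto_of_le_of_le tendsto_const_nhds hlim
    (fun n => zero_le) hBle
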